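/- Let ε₀ > 0 be sufficiently small and let a_{i,j} be real numbers (2 ≤ i ≤ d, 0 ≤ j ≤ i) satisfying |a_{2,0}| + |a_{2,2}| + 100^d Σ_{i=3}^{d} Σ_{j=0}^{i} |a_{i,j}| ≤ ε₀, and let a ∈ [-10,10]. Define F(θ) = (a_{2,0} + Σ_{i=3}^{d} a_{i,i−2} a^{i−2}) cos²θ + (1 + Σ_{i=3}^{d} (i−1) a_{i,i−1} a^{i−2}) sinθ cosθ + (a_{2,2} + Σ_{i=3}^{d} (i(i−1)/2) a_{i,i} a^{i−2}) sin²θ. Then F'(θ) ≥ 1/2 for every θ with |θ| ≤ ε₀^{1/2}. -/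

import Mathlib

noncomputable section

/-- Coefficient smallness condition
`|a₂₀| + |a₂₂| + 100^d Σ_{i=3}^d Σ_{j=0}^i |a_{i,j}| ≤ ε₀`. -/
def CoeffSmall (d : ℕ) (ε₀ : ℝ) (a : ℕ → ℕ → ℝ) : Prop :=
  |a 2 0| + |a 2 2| +
      100 ^ d * ∑ i ∈ Finset.Icc 3 d, ∑ j ∈ Finset.range (i + 1), |a i j| ≤ ε₀

/-- The coefficient of `ξ²` after translating `(0,a)` to the origin and rotating by `θ`:
`F(θ) = (a₂₀ + Σ a_{i,i-2} a^{i-2}) cos²θ + (1 + Σ (i-1)a_{i,i-1} a^{i-2}) sinθcosθ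
       + (a₂₂ + Σ (i(i-1)/2) a_{i,i} a^{i-2}) sin²θ`. -/
def Fcoef (d : ℕ) (a : ℕ → ℕ → ℝ) (t θ : ℝ) : ℝ :=
  (a 2 0 + ∑ i ∈ Finset.Icc 3 d, a i (i - 2) * t ^ (i - 2)) * Real.cos θ ^ 2 +
    (1 + ∑ i ∈ Finset.Icc 3 d, ((i : ℝ) - 1) * a i (i - 1) * t ^ (i - 2)) *
      Real.sin θ * Real.cos θ +
    (a 2 2 + ∑ i ∈ Finset.Icc 3 d, ((i : ℝ) * ((i : ℝ) - 1) / 2) * a i i * t ^ (i - 2)) *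
      Real.sin θ ^ 2

lemma aux_sum_abs_le (d : ℕ) (ε₀ : ℝ) (a : ℕ → ℕ → ℝ) (h : CoeffSmall d ε₀ a)
    (t : ℝ) (ht : |t| ≤ 10) (c : ℕ → ℝ) (j : ℕ → ℕ)
    (hj : ∀ i ∈ Finset.Icc 3 d, j i ≤ i)
    (hc : ∀ i ∈ Finset.Icc 3 d, |c i| ≤ (i : ℝ) ^ 2) :
    |∑ i ∈ Finset.Icc 3 d, c i * a i (j i) * t ^ (i - 2)| ≤ ε₀ := by
  have hS : 100 ^ d * ∑ i ∈ Finset.Icc 3 d, ∑ j' ∈ Finset.range (i + 1), |a i j'| ≤ ε₀ := by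
    have h1 := abs_nonneg (a 2 0); have h2 := abs_nonneg (a 2 2)
    unfold CoeffSmall at h; linarith
  calc |∑ i ∈ Finset.Icc 3 d, c i * a i (j i) * t ^ (i - 2)|
      ≤ ∑ i ∈ Finset.Icc 3 d, |c i * a i (j i) * t ^ (i - 2)| :=
        Finset.abs_sum_le_sum_abs _ _
    _ ≤ ∑ i ∈ Finset.Icc 3 d, 100 ^ d * ∑ j' ∈ Finset.range (i + 1), |a i j'| := by
        apply Finset.sum_le_sum
        intro i hi
        have hid : i ≤ d := (Finset.mem_Icc.mp hi).2
        have hone : |a i (j i)| ≤ ∑ j' ∈ Finset.range (i + 1), |a i j'| := by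
          apply Finset.single_le_sum (fun k _ => abs_nonneg (a i k))
          exact Finset.mem_range.mpr (Nat.lt_succ_of_le (hj i hi))
        have htp : |t| ^ (i - 2) ≤ 10 ^ (i - 2) :=
          pow_le_pow_left₀ (abs_nonneg t) ht _
        have hi2 : (i : ℝ) ^ 2 ≤ 10 ^ i := by
          have h1 : (i : ℝ) ≤ 2 ^ i := by exact_mod_cast (Nat.lt_two_pow_self (n := i)).le
          have h2 : (i : ℝ) ^ 2 ≤ ((2 : ℝ) ^ i) ^ 2 :=
            pow_le_pow_left₀ (Nat.cast_nonneg i) h1 2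
          have h3 : ((2 : ℝ) ^ i) ^ 2 = 4 ^ i := by
            rw [← pow_mul, pow_mul']; norm_num
          have h4 : (4 : ℝ) ^ i ≤ 10 ^ i := pow_le_pow_left₀ (by norm_num) (by norm_num) i
          linarith
        have hcoef : |c i| * |t| ^ (i - 2) ≤ 100 ^ d := by
          have h5 : (10 : ℝ) ^ (i - 2) ≤ 10 ^ d :=
            pow_le_pow_right₀ (by norm_num) (le_trans (Nat.sub_le i 2) hid)
          have h6 : (10 : ℝ) ^ i ≤ 10 ^ d := pow_le_pow_right₀ (by norm_num) hid
          have h7 : |c i| * |t| ^ (i - 2) ≤ 10 ^ d * 10 ^ d := by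
            apply mul_le_mul (le_trans (hc i hi) (le_trans hi2 h6))
              (le_trans htp h5) (pow_nonneg (abs_nonneg t) _) (by positivity)
          have h8 : (10 : ℝ) ^ d * 10 ^ d = 100 ^ d := by
            rw [← mul_pow]; norm_num
          linarith
        calc |c i * a i (j i) * t ^ (i - 2)|
            = |c i| * |t| ^ (i - 2) * |a i (j i)| := by
              rw [abs_mul, abs_mul, abs_pow]; ring
          _ ≤ 100 ^ d * |a i (j i)| := by
              apply mul_le_mul_of_nonneg_right hcoef (abs_nonneg _)
          _ ≤ 100 ^ d * ∑ j' ∈ Finset.range (i + 1), |a i j'| := by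
              apply mul_le_mul_of_nonneg_left hone (by positivity)
    _ = 100 ^ d * ∑ i ∈ Finset.Icc 3 d, ∑ j' ∈ Finset.range (i + 1), |a i j'| :=
        (Finset.mul_sum _ _ _).symm
    _ ≤ ε₀ := hS

set_option maxHeartbeats 1000000 in
/-- `F'(θ) ≥ 1/2` for every `|θ| ≤ ε₀^{1/2}`. -/
theorem statement4 (d : ℕ) (hd : 3 ≤ d) :
    ∃ ε₀' > (0 : ℝ), ∀ ε₀ : ℝ, 0 < ε₀ → ε₀ ≤ ε₀' →
      ∀ a : ℕ → ℕ → ℝ, CoeffSmall d ε₀ a →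
        ∀ t : ℝ, |t| ≤ 10 →
          ∀ θ : ℝ, |θ| ≤ Real.sqrt ε₀ →
            1 / 2 ≤ deriv (Fcoef d a t) θ := by
  refine ⟨1 / 100, by norm_num, ?_⟩
  intro ε₀ hε₀ hε₀' a ha t ht θ hθ
  set A : ℝ := a 2 0 + ∑ i ∈ Finset.Icc 3 d, a i (i - 2) * t ^ (i - 2) with hAdef
  set B : ℝ := 1 + ∑ i ∈ Finset.Icc 3 d, ((i : ℝ) - 1) * a i (i - 1) * t ^ (i - 2) with hBdef
  set C : ℝ := a 2 2 + ∑ i ∈ Finset.Icc 3 d, ((i : ℝ) * ((i : ℝ) - 1) / 2) * a i i * t ^ (i - 2)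
    with hCdef
  -- bounds on the sums
  have hsq : ∀ i ∈ Finset.Icc 3 d, (3 : ℝ) ≤ (i : ℝ) := by
    intro i hi
    exact_mod_cast (Finset.mem_Icc.mp hi).1
  have hSA : |∑ i ∈ Finset.Icc 3 d, a i (i - 2) * t ^ (i - 2)| ≤ ε₀ := by
    have key := aux_sum_abs_le d ε₀ a ha t ht (fun _ => 1) (fun i => i - 2)
      (fun i _ => Nat.sub_le i 2) ?_
    · simpa using key
    · intro i hi
      have h3 := hsq i hi
      show |(1 : ℝ)| ≤ (i : ℝ) ^ 2
      rw [abs_one]; nlinarith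
  have hSB : |∑ i ∈ Finset.Icc 3 d, ((i : ℝ) - 1) * a i (i - 1) * t ^ (i - 2)| ≤ ε₀ := by
    apply aux_sum_abs_le d ε₀ a ha t ht (fun i => (i : ℝ) - 1) (fun i => i - 1)
      (fun i _ => Nat.sub_le i 1)
    intro i hi
    have h3 := hsq i hi
    show |(i : ℝ) - 1| ≤ (i : ℝ) ^ 2
    rw [abs_of_nonneg (by linarith)]; nlinarith
  have hSC : |∑ i ∈ Finset.Icc 3 d, ((i : ℝ) * ((i : ℝ) - 1) / 2) * a i i * t ^ (i - 2)| ≤ ε₀ := by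
    apply aux_sum_abs_le d ε₀ a ha t ht (fun i => (i : ℝ) * ((i : ℝ) - 1) / 2) (fun i => i)
      (fun i _ => le_refl i)
    intro i hi
    have h3 := hsq i hi
    show |(i : ℝ) * ((i : ℝ) - 1) / 2| ≤ (i : ℝ) ^ 2
    rw [abs_of_nonneg (by nlinarith)]; nlinarith
  have ha20 : |a 2 0| ≤ ε₀ := by
    unfold CoeffSmall at ha
    have h2 := abs_nonneg (a 2 2)
    have h3 : (0:ℝ) ≤ 100 ^ d * ∑ i ∈ Finset.Icc 3 d, ∑ j ∈ Finset.range (i + 1), |a i j| := by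
      positivity
    linarith
  have ha22 : |a 2 2| ≤ ε₀ := by
    unfold CoeffSmall at ha
    have h2 := abs_nonneg (a 2 0)
    have h3 : (0:ℝ) ≤ 100 ^ d * ∑ i ∈ Finset.Icc 3 d, ∑ j ∈ Finset.range (i + 1), |a i j| := by
      positivity
    linarith
  have hA : |A| ≤ 2 * ε₀ := by
    calc |A| ≤ |a 2 0| + |∑ i ∈ Finset.Icc 3 d, a i (i - 2) * t ^ (i - 2)| := abs_add_le _ _
      _ ≤ 2 * ε₀ := by linarith
  have hC : |C| ≤ 2 * ε₀ := by
    calc |C| ≤ |a 2 2| + |∑ i ∈ Finset.Icc 3 d, ((i : ℝ) * ((i : ℝ) - 1) / 2) * a i i * t ^ (i - 2)|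
        := abs_add_le _ _
      _ ≤ 2 * ε₀ := by linarith
  have hB : |B - 1| ≤ ε₀ := by simpa [hBdef] using hSB
  -- derivative computation
  have hF : Fcoef d a t = fun x => A * Real.cos x ^ 2 + B * (Real.sin x * Real.cos x)
      + C * Real.sin x ^ 2 := by
    funext x; simp only [Fcoef, hAdef, hBdef, hCdef]; ring
  have hder : HasDerivAt (Fcoef d a t)
      (A * (((2 : ℕ) : ℝ) * Real.cos θ ^ (2 - 1) * (-Real.sin θ))
        + B * (Real.cos θ * Real.cos θ + Real.sin θ * (-Real.sin θ))
        + C * (((2 : ℕ) : ℝ) * Real.sin θ ^ (2 - 1) * Real.cos θ)) θ := by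
    rw [hF]
    exact ((((Real.hasDerivAt_cos θ).pow 2).const_mul A).add
      (((Real.hasDerivAt_sin θ).mul (Real.hasDerivAt_cos θ)).const_mul B)).add
        (((Real.hasDerivAt_sin θ).pow 2).const_mul C)
  rw [hder.deriv]
  norm_num
  -- inequalities
  set s := Real.sin θ
  set co := Real.cos θ
  have hcs : s ^ 2 + co ^ 2 = 1 := Real.sin_sq_add_cos_sq θ
  have hθ2 : θ ^ 2 ≤ ε₀ := by
    have h1 : |θ| ^ 2 ≤ Real.sqrt ε₀ ^ 2 := pow_le_pow_left₀ (abs_nonneg θ) hθ 2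
    rw [sq_abs, Real.sq_sqrt hε₀.le] at h1
    exact h1
  have hs2 : s ^ 2 ≤ ε₀ := le_trans (Real.sin_sq_le_sq) hθ2
  have hsc : |s * co| ≤ 1 := by
    rw [abs_mul]
    exact mul_le_one₀ (Real.abs_sin_le_one θ) (abs_nonneg co) (Real.abs_cos_le_one θ)
  have hAsc : |A * (s * co)| ≤ 2 * ε₀ := by
    rw [abs_mul]
    calc |A| * |s * co| ≤ 2 * ε₀ * 1 :=
        mul_le_mul hA hsc (abs_nonneg _) (by positivity)
      _ = 2 * ε₀ := by ring
  have hCsc : |C * (s * co)| ≤ 2 * ε₀ := by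
    rw [abs_mul]
    calc |C| * |s * co| ≤ 2 * ε₀ * 1 :=
        mul_le_mul hC hsc (abs_nonneg _) (by positivity)
      _ = 2 * ε₀ := by ring
  have hA1 := abs_le.mp hAsc
  have hC1 := abs_le.mp hCsc
  have hB1 := abs_le.mp hB
  have hBpos : 1 - ε₀ ≤ B := by linarith [hB1.1]
  have hd1 : 1 - 2 * ε₀ ≤ co ^ 2 - s ^ 2 := by nlinarith
  have hBd : (1 - ε₀) * (1 - 2 * ε₀) ≤ B * (co ^ 2 - s ^ 2) := by
    apply mul_le_mul hBpos hd1 (by linarith) (by linarith)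
  clear_value s co A B C
  nlinarith [hA1.1, hA1.2, hC1.1, hC1.2, hBd, sq_nonneg ε₀, hε₀.le, hε₀']
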